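/- Let G₂(x,y) = (−(1/4)·x³/y⁴ + (1/12)·x/y² + (1/6)·(1/x), (1/8)·x²/y³ − (1/12)·y/x² − (1/24)·(1/y)). For x > 0 and y > 0, one has G₂(x,y) = (0,0) if and only if x = y. In particular, in the case aμ = −1 the only equilibria of the normalized flow among Berger metrics are round metrics on S³. -/

import Mathlib

open Real Filter Set Topology
open scoped ENNReal

/-- The vector field of the volume-normalized spinor-flow system on Berger spheres
in the case `aμ = -1`. -/
noncomputable def G2 (x y : ℝ) : ℝ × ℝ :=
  (-(1/4) * x^3 / y^4 + (1/12) * x / y^2 + (1/6) * (1/x),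
   (1/8) * x^2 / y^3 - (1/12) * y / x^2 - (1/24) * (1/y))

/-- For `x, y > 0`, `G₂(x,y) = 0` iff `x = y`: in the case `aμ = -1` the only
equilibria of the normalized flow among Berger metrics are the round metrics. -/
theorem G2_equilibria (x y : ℝ) (hx : 0 < x) (hy : 0 < y) :
    G2 x y = (0, 0) ↔ x = y := by
  have hx0 := hx.ne'
  have hy0 := hy.ne'
  rw [G2, Prod.mk.injEq]
  constructor
  · rintro ⟨h1, _⟩
    have h1' : -3 * x^4 + x^2 * y^2 + 2 * y^4 = 0 := by
      field_simp at h1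
      have h24 : (24 * y^2 : ℝ) ≠ 0 := by positivity
      apply mul_left_cancel₀ h24
      rw [mul_zero]
      linear_combination y^2 * h1
    have hsq : x^2 = y^2 := by nlinarith [sq_nonneg x, sq_nonneg y]
    nlinarith [hsq]
  · rintro rfl
    constructor <;> field_simp <;> ring
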